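/- Let G be a countable group acting on a countable set S such that for every finite subset S₀ ⊆ S there exists a finite subset F₀ ⊆ G with (g • S₀) ∩ S₀ = ∅ for all g ∈ G \ F₀. Let (Ω₀, ν₀) be a probability space, X = Π_{s ∈ S} Ω₀ with the product probability measure μ = ⨂_{s ∈ S} ν₀, and let σ be the generalized Bernoulli shift action of G on X given by (g • x)(s) = x(g⁻¹ • s). Then σ is mixing: for all measurable subsets A, B ⊆ X, the function g ↦ μ((g • A) ∩ B) tends to μ(A) · μ(B) along the cofinite filter on G. -/

import Mathlib

open MeasureTheory Filter Set
open scoped symmDiff ENNReal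

section Stmt16Aux

variable {α : Type*} [MeasurableSpace α]

private lemma stmt16_meas_le_add_symmDiff (μ : Measure α) (X Y : Set α) :
    μ X ≤ μ Y + μ (X ∆ Y) := by
  refine le_trans (measure_mono ?_) (measure_union_le _ _)
  intro x hx
  by_cases h : x ∈ Y
  · exact Or.inl h
  · exact Or.inr (Set.mem_symmDiff.2 (Or.inl ⟨hx, h⟩))

omit [MeasurableSpace α] in
private lemma stmt16_inter_symmDiff_subset (X Y Z W : Set α) :
    (X ∩ Z) ∆ (Y ∩ W) ⊆ (X ∆ Y) ∪ (Z ∆ W) := by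
  intro x hx
  simp only [Set.mem_symmDiff, Set.mem_inter_iff, Set.mem_union] at *
  tauto

private lemma stmt16_meas_inter_le (μ : Measure α) (X Y Z W : Set α) :
    μ (X ∩ Z) ≤ μ (Y ∩ W) + (μ (X ∆ Y) + μ (Z ∆ W)) := by
  calc μ (X ∩ Z) ≤ μ (Y ∩ W) + μ ((X ∩ Z) ∆ (Y ∩ W)) :=
        stmt16_meas_le_add_symmDiff μ _ _
    _ ≤ μ (Y ∩ W) + μ ((X ∆ Y) ∪ (Z ∆ W)) :=
        add_le_add_right (measure_mono (stmt16_inter_symmDiff_subset _ _ _ _)) _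
    _ ≤ μ (Y ∩ W) + (μ (X ∆ Y) + μ (Z ∆ W)) :=
        add_le_add_right (measure_union_le _ _) _

private lemma stmt16_mul_le_mul_add3 {a b a' b' d : ℝ≥0∞} (ha' : a' ≤ 1) (hb' : b' ≤ 1)
    (hd : d ≤ 1) (h1 : a ≤ a' + d) (h2 : b ≤ b' + d) : a * b ≤ a' * b' + 3 * d := by
  calc a * b ≤ (a' + d) * (b' + d) := mul_le_mul' h1 h2
    _ = a' * b' + (a' * d + (d * b' + d * d)) := by ring
    _ ≤ a' * b' + (1 * d + (d * 1 + d * 1)) := by gcongr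
    _ = a' * b' + 3 * d := by ring

end Stmt16Aux

/-- If the action of a countable group `G` on a countable set `S` has the property that every
finite `S₀ ⊆ S` is moved off itself by all but finitely many `g ∈ G`, then the generalized
Bernoulli shift action of `G` on `(Π_{s ∈ S} Ω₀, ⨂_{s ∈ S} ν₀)` is mixing:
`μ((g • A) ∩ B) → μ(A)·μ(B)` along the cofinite filter on `G`. The product measure `μ` is
specified by its values on cylinder sets. -/
theorem stmt16 {G S : Type*} [Group G] [Countable G] [Countable S] [MulAction G S]
    (hprop : ∀ S₀ : Finset S, ∃ F₀ : Finset G, ∀ g : G, g ∉ F₀ → ∀ s ∈ S₀, g • s ∉ S₀)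
    {Ω₀ : Type*} [MeasurableSpace Ω₀] (ν₀ : Measure Ω₀) [IsProbabilityMeasure ν₀]
    (μ : Measure (S → Ω₀)) [IsProbabilityMeasure μ]
    (hμ : ∀ (t : Finset S) (A : S → Set Ω₀), (∀ s ∈ t, MeasurableSet (A s)) →
      μ {x : S → Ω₀ | ∀ s ∈ t, x s ∈ A s} = ∏ s ∈ t, ν₀ (A s))
    (A B : Set (S → Ω₀)) (hA : MeasurableSet A) (hB : MeasurableSet B) :
    Tendsto (fun g : G => μ (((fun x : S → Ω₀ => fun s : S => x (g⁻¹ • s)) '' A) ∩ B))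
      cofinite (nhds (μ A * μ B)) := by
  classical
  have hevalmeas : ∀ s : S, Measurable fun x : S → Ω₀ => x s := fun s => measurable_pi_apply s
  -- Step 1: the coordinates are mutually independent.
  have hind : ProbabilityTheory.iIndepFun
      (fun (s : S) (x : S → Ω₀) => x s) μ := by
    rw [ProbabilityTheory.iIndepFun_iff_measure_inter_preimage_eq_mul]
    intro t sets hsets
    have h1 : (⋂ i ∈ t, (fun x : S → Ω₀ => x i) ⁻¹' sets i)
        = {x : S → Ω₀ | ∀ s ∈ t, x s ∈ sets s} := by ext x; simp
    rw [h1, hμ t sets hsets]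
    refine Finset.prod_congr rfl fun i hi => ?_
    have h2 : ((fun x : S → Ω₀ => x i) ⁻¹' sets i)
        = {x : S → Ω₀ | ∀ s ∈ ({i} : Finset S), x s ∈ sets s} := by ext x; simp
    rw [h2, hμ {i} sets (fun s hs => by
      rw [Finset.mem_singleton] at hs; exact hs ▸ hsets i hi), Finset.prod_singleton]
  -- Step 2: cylinders on disjoint coordinate sets are independent.
  have hindep2 : ∀ (P Q : Finset S), Disjoint P Q →
      ∀ (U : Set (∀ i : P, Ω₀)) (V : Set (∀ i : Q, Ω₀)),
      MeasurableSet U → MeasurableSet V →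
      μ (cylinder P U ∩ cylinder Q V) = μ (cylinder P U) * μ (cylinder Q V) := by
    intro P Q hPQ U V hU hV
    have h := hind.indepFun_finset P Q hPQ hevalmeas
    exact ProbabilityTheory.indepFun_iff_measure_inter_preimage_eq_mul.mp h U V hU hV
  -- Step 3: the shift is measure preserving.
  have hpres : ∀ (h : G) (D : Set (S → Ω₀)), MeasurableSet D →
      μ ((fun (x : S → Ω₀) (s : S) => x (h • s)) ⁻¹' D) = μ D := by
    intro h D hD
    have hmeas : Measurable fun (x : S → Ω₀) (s : S) => x (h • s) :=
      measurable_pi_lambda _ fun s => measurable_pi_apply _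
    have hfin : IsFiniteMeasure (μ.map fun (x : S → Ω₀) (s : S) => x (h • s)) :=
      ⟨by rw [Measure.map_apply hmeas MeasurableSet.univ]; exact measure_lt_top μ _⟩
    have hmap : μ.map (fun (x : S → Ω₀) (s : S) => x (h • s)) = μ := by
      refine ext_of_generate_finite
        (squareCylinders fun _ : S => {s : Set Ω₀ | MeasurableSet s})
        generateFrom_squareCylinders.symm
        (isPiSystem_squareCylinders (fun _ => fun s hs u hu _ => hs.inter hu)
          (fun _ => MeasurableSet.univ)) ?_ ?_
      · rintro E ⟨t, Aset, hAset, rfl⟩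
        have hAmeas : ∀ i, MeasurableSet (Aset i) := fun i => hAset i (Set.mem_univ i)
        have hpiE : MeasurableSet ((t : Set S).pi Aset) :=
          MeasurableSet.pi t.countable_toSet fun i _ => hAmeas i
        rw [Measure.map_apply hmeas hpiE]
        have hpre : (fun (x : S → Ω₀) (s : S) => x (h • s)) ⁻¹' ((t : Set S).pi Aset)
            = {x : S → Ω₀ | ∀ s ∈ t.image (fun i => h • i), x s ∈ Aset (h⁻¹ • s)} := by
          ext x
          simp only [Set.mem_preimage, Set.mem_pi, Finset.mem_coe, Set.mem_setOf_eq,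
            Finset.mem_image]
          constructor
          · rintro hx s ⟨i, hi, rfl⟩
            rw [inv_smul_smul]
            exact hx i hi
          · intro hx i hi
            have := hx (h • i) ⟨i, hi, rfl⟩
            rwa [inv_smul_smul] at this
        have hμE : μ ((t : Set S).pi Aset) = ∏ s ∈ t, ν₀ (Aset s) := by
          rw [show ((t : Set S).pi Aset) = {x : S → Ω₀ | ∀ s ∈ t, x s ∈ Aset s} from by
            ext x; simp [Set.mem_pi]]
          exact hμ t Aset fun s _ => hAmeas s
        rw [hpre, hμ (t.image fun i => h • i) (fun s => Aset (h⁻¹ • s)) (fun s _ => hAmeas _),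
          hμE, Finset.prod_image (fun i _ j _ hij => MulAction.injective h hij)]
        exact Finset.prod_congr rfl fun i _ => by rw [inv_smul_smul]
      · rw [Measure.map_apply hmeas MeasurableSet.univ]
        simp
    conv_rhs => rw [← hmap]
    rw [Measure.map_apply hmeas hD]
  -- Step 4: measurable sets can be approximated by cylinders.
  have halg : IsSetAlgebra (measurableCylinders fun _ : S => Ω₀) :=
    ⟨empty_mem_measurableCylinders _, fun _ hs => compl_mem_measurableCylinders hs,
      fun _ _ hs ht => union_mem_measurableCylinders hs ht⟩
  have hdense : μ.MeasureDense (measurableCylinders fun _ : S => Ω₀) :=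
    Measure.MeasureDense.of_generateFrom_isSetAlgebra_finite μ halg
      generateFrom_measurableCylinders.symm
  -- Step 5: the limit.
  rw [ENNReal.tendsto_nhds (ENNReal.mul_ne_top (measure_ne_top μ A) (measure_ne_top μ B))]
  intro ε hε
  set m := min ε 1 with hm_def
  have hm_ne_top : m ≠ ⊤ := ne_top_of_le_ne_top ENNReal.one_ne_top (min_le_right _ _)
  have hm_pos : 0 < m := lt_min hε zero_lt_one
  set δr : ℝ := m.toReal / 8 with hδr_def
  have htR := ENNReal.toReal_pos hm_pos.ne' hm_ne_top
  have hδr_pos : 0 < δr := by positivity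
  have hδm : ENNReal.ofReal δr ≤ m := by
    conv_rhs => rw [← ENNReal.ofReal_toReal hm_ne_top]
    exact ENNReal.ofReal_le_ofReal (by rw [hδr_def]; linarith)
  have hδ1 : ENNReal.ofReal δr ≤ 1 := hδm.trans (min_le_right _ _)
  have h5δ : 5 * ENNReal.ofReal δr ≤ ε := by
    have h8 : (8 : ℝ≥0∞) * ENNReal.ofReal δr = m := by
      rw [← ENNReal.ofReal_ofNat 8, ← ENNReal.ofReal_mul (by norm_num), hδr_def,
        show (8 : ℝ) * (m.toReal / 8) = m.toReal by ring]
      exact ENNReal.ofReal_toReal hm_ne_top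
    calc (5 : ℝ≥0∞) * ENNReal.ofReal δr ≤ 8 * ENNReal.ofReal δr := by
          gcongr; norm_num
      _ = m := h8
      _ ≤ ε := min_le_left _ _
  obtain ⟨A', hA'mem, hAA'⟩ := hdense.approx A hA (measure_ne_top μ A) δr hδr_pos
  obtain ⟨B', hB'mem, hBB'⟩ := hdense.approx B hB (measure_ne_top μ B) δr hδr_pos
  have hA'meas : MeasurableSet A' := MeasurableSet.of_mem_measurableCylinders hA'mem
  have hB'meas : MeasurableSet B' := MeasurableSet.of_mem_measurableCylinders hB'mem
  obtain ⟨t, U, hU, hA'eq⟩ := (mem_measurableCylinders _).1 hA'mem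
  obtain ⟨u, V, hV, hB'eq⟩ := (mem_measurableCylinders _).1 hB'mem
  obtain ⟨F₀, hF₀⟩ := hprop (t ∪ u)
  filter_upwards [F₀.eventually_cofinite_notMem] with g hg
  set W : (S → Ω₀) → (S → Ω₀) := fun x s => x (g • s) with hW_def
  have himg : ((fun x : S → Ω₀ => fun s : S => x (g⁻¹ • s)) '' A) = W ⁻¹' A := by
    ext y
    constructor
    · rintro ⟨x, hx, rfl⟩
      have hWx : W (fun s => x (g⁻¹ • s)) = x := funext fun s => by
        simp [hW_def, inv_smul_smul]
      simpa [Set.mem_preimage, hWx] using hx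
    · intro hy
      exact ⟨W y, hy, funext fun s => by simp [hW_def, smul_inv_smul]⟩
  rw [himg]
  set P : Finset S := t.image (fun s => g • s) with hP_def
  have hPu : Disjoint P u := by
    rw [Finset.disjoint_left]
    rintro a haP hau
    obtain ⟨i, hi, rfl⟩ := Finset.mem_image.1 haP
    exact hF₀ g hg i (Finset.mem_union_left _ hi) (Finset.mem_union_right _ hau)
  set r : (∀ j : P, Ω₀) → (∀ i : t, Ω₀) :=
    fun y i => y ⟨g • (i : S), Finset.mem_image_of_mem _ i.2⟩ with hr_def
  have hrmeas : Measurable r := measurable_pi_lambda _ fun i => measurable_pi_apply _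
  have hC'eq : W ⁻¹' A' = cylinder P (r ⁻¹' U) := by
    rw [hA'eq]; rfl
  have hsymmA : μ ((W ⁻¹' A) ∆ (W ⁻¹' A')) ≤ ENNReal.ofReal δr := by
    have hAB : (W ⁻¹' A) ∆ (W ⁻¹' A') = W ⁻¹' (A ∆ A') := by
      simp [Set.symmDiff_def, Set.preimage_union, Set.preimage_diff]
    rw [hAB, hpres g _ (hA.symmDiff hA'meas)]
    exact hAA'.le
  have hmuC' : μ (W ⁻¹' A') = μ A' := hpres g A' hA'meas
  have hprod : μ ((W ⁻¹' A') ∩ B') = μ A' * μ B' := by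
    rw [hC'eq, hB'eq, hindep2 P u hPu _ V (hrmeas hU) hV, ← hC'eq, ← hB'eq, hmuC']
  have hA'le : μ A' ≤ μ A + ENNReal.ofReal δr := by
    refine (stmt16_meas_le_add_symmDiff μ A' A).trans ?_
    rw [symmDiff_comm]
    exact add_le_add_right hAA'.le _
  have hB'le : μ B' ≤ μ B + ENNReal.ofReal δr := by
    refine (stmt16_meas_le_add_symmDiff μ B' B).trans ?_
    rw [symmDiff_comm]
    exact add_le_add_right hBB'.le _
  have hAle : μ A ≤ μ A' + ENNReal.ofReal δr :=
    (stmt16_meas_le_add_symmDiff μ A A').trans (add_le_add_right hAA'.le _)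
  have hBle : μ B ≤ μ B' + ENNReal.ofReal δr :=
    (stmt16_meas_le_add_symmDiff μ B B').trans (add_le_add_right hBB'.le _)
  constructor
  · -- lower bound
    rw [tsub_le_iff_right]
    calc μ A * μ B ≤ μ A' * μ B' + 3 * ENNReal.ofReal δr :=
          stmt16_mul_le_mul_add3 prob_le_one prob_le_one hδ1 hAle hBle
      _ = μ ((W ⁻¹' A') ∩ B') + 3 * ENNReal.ofReal δr := by rw [hprod]
      _ ≤ (μ ((W ⁻¹' A) ∩ B) + (μ ((W ⁻¹' A') ∆ (W ⁻¹' A)) + μ (B' ∆ B)))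
            + 3 * ENNReal.ofReal δr :=
          add_le_add_left (stmt16_meas_inter_le μ _ _ _ _) _
      _ ≤ (μ ((W ⁻¹' A) ∩ B) + (ENNReal.ofReal δr + ENNReal.ofReal δr))
            + 3 * ENNReal.ofReal δr := by
          gcongr
          · rw [symmDiff_comm]; exact hsymmA
          · rw [symmDiff_comm]; exact hBB'.le
      _ = μ ((W ⁻¹' A) ∩ B) + 5 * ENNReal.ofReal δr := by ring
      _ ≤ μ ((W ⁻¹' A) ∩ B) + ε := add_le_add_right h5δ _
  · -- upper bound
    calc μ ((W ⁻¹' A) ∩ B)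
        ≤ μ ((W ⁻¹' A') ∩ B') + (μ ((W ⁻¹' A) ∆ (W ⁻¹' A')) + μ (B ∆ B')) :=
          stmt16_meas_inter_le μ _ _ _ _
      _ ≤ μ ((W ⁻¹' A') ∩ B') + (ENNReal.ofReal δr + ENNReal.ofReal δr) := by
          gcongr
      _ = μ A' * μ B' + (ENNReal.ofReal δr + ENNReal.ofReal δr) := by rw [hprod]
      _ ≤ (μ A * μ B + 3 * ENNReal.ofReal δr) + (ENNReal.ofReal δr + ENNReal.ofReal δr) :=
          add_le_add_left
            (stmt16_mul_le_mul_add3 prob_le_one prob_le_one hδ1 hA'le hB'le) _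
      _ = μ A * μ B + 5 * ENNReal.ofReal δr := by ring
      _ ≤ μ A * μ B + ε := add_le_add_right h5δ _
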